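/- Define b_rec(n) recursively by b_rec(n) = 0 for n ∈ {0, 1, 2} and b_rec(n) = max over n1 + n2 = n with n1 ≥ 1 of [C(n1, 2) * n2 + b_rec(n2)] for n ≥ 3. Then b_rec(n) / C(n, 3) converges to 2*√3 - 3 as n → ∞. -/

import Mathlib

/-- `bRec n` is the maximum number of edges of an `n`-vertex iterated
semi-bipartite (`B_rec`) construction. -/
def bRec : ℕ → ℕ
  | 0 => 0
  | 1 => 0
  | 2 => 0
  | n + 3 =>
    ((Finset.range (n + 3)).attach).sup
      (fun x => (n + 3 - x.1).choose 2 * x.1 + bRec x.1)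
decreasing_by
  exact Finset.mem_range.mp x.2

private lemma hs3 : (Real.sqrt 3)^2 = 3 := Real.sq_sqrt (by norm_num)
private lemma hs0 : 0 ≤ Real.sqrt 3 := Real.sqrt_nonneg 3
private lemma hs1 : 1.5 ≤ Real.sqrt 3 := by nlinarith [hs3, hs0]
private lemma hs2 : Real.sqrt 3 ≤ 2 := by nlinarith [hs3, hs0]

private lemma choose3_cast (m : ℕ) : (((m+3).choose 3 : ℕ) : ℝ) = (m+3)*(m+2)*(m+1)/6 := by
  induction m with
  | zero => norm_num
  | succ k ih =>
    have h : (k+1+3).choose 3 = (k+3).choose 2 + (k+3).choose 3 :=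
      Nat.choose_succ_succ (k+3) 2
    rw [h, Nat.cast_add, ih, Nat.cast_choose_two]
    push_cast
    ring

private lemma key_id (s N K : ℝ) :
    (2*s-3)*N^3 - 3*(N-K)^2*K - (2*s-3)*K^3
      - s/2*(N-K)*(2*K-(s-1)*N)^2
      = (s^2-3) * (-2*N*K^2 + (s/2+1)*N^2*K + (1-s/2)*N^3) := by
  ring

private lemma upper_key (s N K B : ℝ) (hs : s^2 = 3) (hs0 : 0 ≤ s)
    (hK0 : 0 ≤ K) (hNK : 0 ≤ N - K) (hB : B ≤ (2*s-3)*K^3/6) :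
    (N-K)*((N-K)-1)/2*K + B ≤ (2*s-3)*N^3/6 := by
  have hid := key_id s N K
  rw [hs] at hid
  have hpos : 0 ≤ s/2*(N-K)*(2*K-(s-1)*N)^2 :=
    mul_nonneg (mul_nonneg (by positivity) hNK) (sq_nonneg _)
  nlinarith [mul_nonneg hNK hK0]

private lemma lower_key (s N K B : ℝ) (hs : s^2 = 3) (hs1 : 1.5 ≤ s) (hs2 : s ≤ 2)
    (hN : 3 ≤ N) (hK0 : 0 ≤ K) (hK1 : K ≤ (s-1)/2*N) (hK2 : (s-1)/2*N ≤ K+1)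
    (hKN : K + 1 ≤ N) (hB : (2*s-3)*K^3/6 - K^2 ≤ B) :
    (2*s-3)*N^3/6 - N^2 ≤ (N-K)*((N-K)-1)/2*K + B := by
  have hid := key_id s N K
  rw [hs] at hid
  have hNK0 : 0 ≤ N - K := by linarith
  have hQ : (2*K-(s-1)*N)^2 ≤ 4 := by
    nlinarith [mul_nonneg (by linarith : (0:ℝ) ≤ (s-1)/2*N - K)
      (by linarith : (0:ℝ) ≤ K + 1 - (s-1)/2*N)]
  have hT : s/2*(N-K)*(2*K-(s-1)*N)^2 ≤ 4*N := by
    nlinarith [mul_nonneg (by linarith : (0:ℝ) ≤ 2 - s)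
        (mul_nonneg hNK0 (sq_nonneg (2*K-(s-1)*N))),
      mul_nonneg hNK0 (by linarith : (0:ℝ) ≤ 4 - (2*K-(s-1)*N)^2),
      mul_nonneg hK0 (sq_nonneg (2*K-(s-1)*N))]
  have h2K : 2*K ≤ N := by nlinarith
  nlinarith [hid, hT,
    mul_nonneg (by linarith : (0:ℝ) ≤ N - 2*K) (by linarith : (0:ℝ) ≤ N + 2*K),
    mul_nonneg (by linarith : (0:ℝ) ≤ N) (by linarith : (0:ℝ) ≤ N - 2*K),
    mul_nonneg (by linarith : (0:ℝ) ≤ N) (by linarith : (0:ℝ) ≤ N - 3)]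

private lemma bRec_upper (n : ℕ) :
    (bRec n : ℝ) ≤ (2*Real.sqrt 3 - 3) * n^3 / 6 := by
  induction n using Nat.strong_induction_on with
  | _ n ih =>
    rcases n with _|_|_|m
    · simp [bRec]
    · simp [bRec]
      nlinarith [hs1]
    · simp [bRec]
      nlinarith [hs1]
    · obtain ⟨x, hx, hsup⟩ := Finset.exists_mem_eq_sup ((Finset.range (m + 3)).attach)
        (by simp [Finset.attach_nonempty_iff]) (fun x => (m + 3 - x.1).choose 2 * x.1 + bRec x.1)
      rw [bRec, hsup]
      have hk : x.1 < m + 3 := Finset.mem_range.mp x.2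
      have ihk := ih x.1 hk
      have hcast : ((m+3-x.1 : ℕ) : ℝ) = ((m:ℝ)+3) - (x.1:ℝ) := by
        rw [Nat.cast_sub hk.le]; push_cast; ring
      push_cast [Nat.cast_choose_two, hcast]
      have hK0 : (0:ℝ) ≤ (x.1:ℝ) := Nat.cast_nonneg _
      have hKN : (0:ℝ) ≤ ((m:ℝ)+3) - (x.1:ℝ) := by
        have : (x.1 : ℝ) ≤ ((m:ℝ)+3) := by exact_mod_cast hk.le
        linarith
      have hB : (bRec x.1 : ℝ) ≤ (2*Real.sqrt 3 - 3)*(x.1:ℝ)^3/6 := by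
        have := ihk; push_cast at this; linarith [this]
      have := upper_key (Real.sqrt 3) ((m:ℝ)+3) (x.1:ℝ) (bRec x.1 : ℝ) hs3 hs0 hK0 hKN hB
      linarith [this]

private lemma bRec_lower (n : ℕ) :
    (2*Real.sqrt 3 - 3) * n^3 / 6 - n^2 ≤ (bRec n : ℝ) := by
  induction n using Nat.strong_induction_on with
  | _ n ih =>
    rcases n with _|_|_|m
    · simp [bRec]
    · simp [bRec]
      nlinarith [hs2, hs1]
    · simp [bRec]
      nlinarith [hs2, hs1]
    · have hm0 : (0:ℝ) ≤ (m:ℝ) := Nat.cast_nonneg _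
      have hN3 : (3:ℝ) ≤ (m:ℝ)+3 := by linarith
      have harg0 : 0 ≤ (Real.sqrt 3 - 1)/2 * ((m:ℝ)+3) := by nlinarith [hs1]
      set k : ℕ := ⌊(Real.sqrt 3 - 1)/2 * ((m:ℝ)+3)⌋₊ with hkdef
      have hK1 : (k:ℝ) ≤ (Real.sqrt 3 - 1)/2 * ((m:ℝ)+3) := Nat.floor_le harg0
      have hK2 : (Real.sqrt 3 - 1)/2 * ((m:ℝ)+3) ≤ (k:ℝ) + 1 :=
        (Nat.lt_floor_add_one _).le
      have hkm : k < m + 3 := by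
        rw [hkdef, Nat.floor_lt harg0]
        push_cast
        nlinarith [hs2]
      have hkmem : k ∈ Finset.range (m+3) := Finset.mem_range.mpr hkm
      have hsup : (m+3-k).choose 2 * k + bRec k ≤ bRec (m+3) := by
        rw [bRec]
        exact Finset.le_sup (f := fun x => (m+3-x.1).choose 2 * x.1 + bRec x.1)
          (Finset.mem_attach _ ⟨k, hkmem⟩)
      have ihk := ih k hkm
      have hcast : ((m+3-k : ℕ) : ℝ) = ((m:ℝ)+3) - (k:ℝ) := by
        rw [Nat.cast_sub hkm.le]; push_cast; ring
      have hsup' : (((m+3-k).choose 2 * k + bRec k : ℕ) : ℝ) ≤ ((bRec (m+3) : ℕ) : ℝ) := by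
        exact_mod_cast hsup
      have hexp : (((m+3-k).choose 2 * k + bRec k : ℕ) : ℝ)
          = (((m:ℝ)+3) - (k:ℝ)) * ((((m:ℝ)+3) - (k:ℝ)) - 1) / 2 * (k:ℝ) + (bRec k : ℝ) := by
        push_cast [Nat.cast_choose_two, hcast]; ring
      rw [hexp] at hsup'
      have hK0 : (0:ℝ) ≤ (k:ℝ) := Nat.cast_nonneg _
      have hKN : (k:ℝ) + 1 ≤ (m:ℝ)+3 := by
        have : ((k:ℝ)+1) ≤ ((m+3 : ℕ) : ℝ) := by exact_mod_cast hkm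
        push_cast at this; linarith
      have hB : (2*Real.sqrt 3 - 3)*(k:ℝ)^3/6 - (k:ℝ)^2 ≤ (bRec k : ℝ) := by
        have := ihk; push_cast at this; linarith [this]
      have key := lower_key (Real.sqrt 3) ((m:ℝ)+3) (k:ℝ) (bRec k : ℝ)
        hs3 hs1 hs2 hN3 hK0 hK1 hK2 hKN hB
      push_cast
      linarith [key, hsup']

theorem stmt12 :
    Filter.Tendsto (fun n : ℕ => (bRec n : ℝ) / (n.choose 3))
      Filter.atTop (nhds (2 * Real.sqrt 3 - 3)) := by
  have h1n : Filter.Tendsto (fun n : ℕ => (1:ℝ)/n) Filter.atTop (nhds 0) :=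
    tendsto_const_div_atTop_nhds_zero_nat 1
  have h2n : Filter.Tendsto (fun n : ℕ => (2:ℝ)/n) Filter.atTop (nhds 0) :=
    tendsto_const_div_atTop_nhds_zero_nat 2
  have h6n : Filter.Tendsto (fun n : ℕ => (6:ℝ)/n) Filter.atTop (nhds 0) :=
    tendsto_const_div_atTop_nhds_zero_nat 6
  have hg : Filter.Tendsto (fun n : ℕ => (1 - 1/(n:ℝ)) * (1 - 2/(n:ℝ)))
      Filter.atTop (nhds 1) := by
    have := ((tendsto_const_nhds (x := (1:ℝ)) (f := Filter.atTop (α := ℕ))).sub h1n).mul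
      ((tendsto_const_nhds (x := (1:ℝ)) (f := Filter.atTop (α := ℕ))).sub h2n)
    simpa using this
  have hhi : Filter.Tendsto
      (fun n : ℕ => (2*Real.sqrt 3 - 3) / ((1 - 1/(n:ℝ)) * (1 - 2/(n:ℝ))))
      Filter.atTop (nhds (2*Real.sqrt 3 - 3)) := by
    have := (tendsto_const_nhds (x := 2*Real.sqrt 3 - 3)
      (f := Filter.atTop (α := ℕ))).div hg one_ne_zero
    rw [div_one] at this; exact this
  have hlo : Filter.Tendsto
      (fun n : ℕ => ((2*Real.sqrt 3 - 3) - 6/(n:ℝ)) / ((1 - 1/(n:ℝ)) * (1 - 2/(n:ℝ))))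
      Filter.atTop (nhds (2*Real.sqrt 3 - 3)) := by
    have := ((tendsto_const_nhds (x := 2*Real.sqrt 3 - 3)
      (f := Filter.atTop (α := ℕ))).sub h6n).div hg one_ne_zero
    rw [sub_zero, div_one] at this; exact this
  have hfacts : ∀ n : ℕ, 3 ≤ n →
      ((n.choose 3 : ℕ) : ℝ) = (n:ℝ)*((n:ℝ)-1)*((n:ℝ)-2)/6 ∧
      (0:ℝ) < ((n.choose 3 : ℕ) : ℝ) ∧ (0:ℝ) < (1 - 1/(n:ℝ)) * (1 - 2/(n:ℝ)) ∧
      (3:ℝ) ≤ (n:ℝ) := by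
    intro n hn
    obtain ⟨m, rfl⟩ : ∃ m, n = m + 3 := ⟨n - 3, by omega⟩
    have hm0 : (0:ℝ) ≤ (m:ℝ) := Nat.cast_nonneg _
    have hN : (3:ℝ) ≤ ((m+3:ℕ):ℝ) := by push_cast; linarith
    have hc' : (((m+3).choose 3 : ℕ) : ℝ)
        = ((m+3:ℕ):ℝ)*(((m+3:ℕ):ℝ)-1)*(((m+3:ℕ):ℝ)-2)/6 := by
      rw [choose3_cast m]; push_cast; ring
    refine ⟨hc', ?_, ?_, hN⟩
    · rw [hc']
      have h1 : (0:ℝ) < ((m+3:ℕ):ℝ) := by linarith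
      have h2 : (0:ℝ) < ((m+3:ℕ):ℝ) - 1 := by linarith
      have h3 : (0:ℝ) < ((m+3:ℕ):ℝ) - 2 := by linarith
      have := mul_pos (mul_pos h1 h2) h3
      linarith
    · have hn0 : (0:ℝ) < ((m+3:ℕ):ℝ) := by linarith
      have e1 : (1:ℝ)/((m+3:ℕ):ℝ) ≤ 1/3 := by
        rw [div_le_div_iff₀ hn0 (by norm_num)]; linarith
      have e2 : (2:ℝ)/((m+3:ℕ):ℝ) ≤ 2/3 := by
        rw [div_le_div_iff₀ hn0 (by norm_num)]; linarith
      nlinarith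
  apply tendsto_of_tendsto_of_tendsto_of_le_of_le' hlo hhi
  · filter_upwards [Filter.eventually_ge_atTop 3] with n hn
    obtain ⟨hc, hcpos, hgpos, hN⟩ := hfacts n hn
    have hlow := bRec_lower n
    have step1 : ((2*Real.sqrt 3 - 3) * (n:ℝ)^3/6 - (n:ℝ)^2) / ((n.choose 3 : ℕ):ℝ)
        ≤ (bRec n : ℝ) / ((n.choose 3 : ℕ):ℝ) :=
      (div_le_div_iff_of_pos_right hcpos).2 hlow
    refine le_trans (le_of_eq ?_) step1
    have hn0 : (0:ℝ) < (n:ℝ) := by linarith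
    rw [hc, div_eq_div_iff hgpos.ne' (by nlinarith : (0:ℝ) < (n:ℝ)*((n:ℝ)-1)*((n:ℝ)-2)/6).ne']
    field_simp
  · filter_upwards [Filter.eventually_ge_atTop 3] with n hn
    obtain ⟨hc, hcpos, hgpos, hN⟩ := hfacts n hn
    have hup := bRec_upper n
    have step1 : (bRec n : ℝ) / ((n.choose 3 : ℕ):ℝ)
        ≤ ((2*Real.sqrt 3 - 3) * (n:ℝ)^3/6) / ((n.choose 3 : ℕ):ℝ) :=
      (div_le_div_iff_of_pos_right hcpos).2 hup
    refine le_trans step1 (le_of_eq ?_)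
    have hn0 : (0:ℝ) < (n:ℝ) := by linarith
    rw [hc, div_eq_div_iff (by nlinarith : (0:ℝ) < (n:ℝ)*((n:ℝ)-1)*((n:ℝ)-2)/6).ne' hgpos.ne']
    field_simp
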